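/- For any integer m ≥ 1 and any sequence c : ℕ → ℤ satisfying c(n+m+1) + c(n) = [c(n+m)]₊ + [c(n+1)]₊ for all n ≥ 0, there exists N ∈ ℕ such that for all n ≥ N: c(n+m) ≥ c(n) ≥ 0. -/
import Mathlib


/-- Eventual monotone positivity for the tropical coefficient recurrence of type `A_m⁽¹⁾`. -/
theorem tropical_coeff_eventually_nonneg (m : ℕ) (hm : 1 ≤ m) (c : ℕ → ℤ)
    (hrec : ∀ n : ℕ, c (n + m + 1) + c n = max 0 (c (n + m)) + max 0 (c (n + 1))) :
    ∃ N : ℕ, ∀ n ≥ N, c n ≤ c (n + m) ∧ 0 ≤ c n := by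
  -- the difference d n = c (n+m) - c n is nondecreasing
  have hdstep : ∀ n : ℕ, c (n + m) - c n ≤ c (n + 1 + m) - c (n + 1) := by
    intro n
    have h := hrec n
    have h1 : c (n + m) ≤ max 0 (c (n + m)) := le_max_right _ _
    have h2 : c (n + 1) ≤ max 0 (c (n + 1)) := le_max_right _ _
    have e : n + 1 + m = n + m + 1 := by omega
    rw [e]
    omega
  have hdmono : Monotone (fun n => c (n + m) - c n) :=
    monotone_nat_of_le_succ hdstep
  by_cases hA : ∃ N₀ : ℕ, 0 ≤ c (N₀ + m) - c N₀
  · obtain ⟨N₀, hN₀⟩ := hA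
    have hge : ∀ n, N₀ ≤ n → c n ≤ c (n + m) := by
      intro n hn
      have := hdmono hn
      simp only at this
      omega
    -- key step: no two consecutive "negatives" one period apart
    have key : ∀ n, N₀ ≤ n → c (n + 1) < 0 → 0 ≤ c (n + m + 1) := by
      intro n hn h1
      have hr := hrec n
      have hx := hge n hn
      have h2 : 0 ≤ max 0 (c (n + m)) := le_max_left _ _
      have h3 : c (n + m) ≤ max 0 (c (n + m)) := le_max_right _ _
      have h4 : max 0 (c (n + 1)) = 0 := max_eq_left h1.le
      omega
    refine ⟨N₀ + m + 1, ?_⟩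
    intro n hn
    obtain ⟨k, rfl⟩ : ∃ k, n = k + m + 1 := ⟨n - m - 1, by omega⟩
    have hk : N₀ ≤ k := by omega
    have hmon : c (k + m + 1) ≤ c (k + m + 1 + m) := hge _ (by omega)
    refine ⟨hmon, ?_⟩
    by_contra hneg
    push_neg at hneg
    have h1 : c (k + 1) < 0 → 0 ≤ c (k + m + 1) := key k hk
    have h2 : c (k + 1) ≤ c (k + 1 + m) := hge (k + 1) (by omega)
    have e : k + 1 + m = k + m + 1 := by omega
    rw [e] at h2
    omega
  · exfalso
    push_neg at hA
    have step : ∀ n, c (n + m) ≤ c n - 1 := by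
      intro n
      have := hA n
      omega
    have iter : ∀ k r : ℕ, c (r + k * m) ≤ c r - k := by
      intro k
      induction k with
      | zero => simp
      | succ k ih =>
        intro r
        have h1 := ih r
        have h2 := step (r + k * m)
        have e : r + (k + 1) * m = r + k * m + m := by ring
        rw [e]
        push_cast
        push_cast at h1
        omega
    have hne : (Finset.range m).Nonempty := Finset.nonempty_range_iff.mpr (by omega)
    set B : ℤ := (Finset.range m).sup' hne c with hBdef
    have hB : ∀ r, r < m → c r ≤ B := fun r hr => Finset.le_sup' c (Finset.mem_range.mpr hr)
    have neg : ∀ n, m * (B.toNat + 1) ≤ n → c n < 0 := by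
      intro n hn
      have e : n % m + n / m * m = n := Nat.mod_add_div' n m
      have h1 := iter (n / m) (n % m)
      rw [e] at h1
      have h2 := hB (n % m) (Nat.mod_lt n (by omega))
      have h3 : B.toNat + 1 ≤ n / m :=
        (Nat.le_div_iff_mul_le (by omega)).mpr (by rw [Nat.mul_comm]; exact hn)
      have h4 : B ≤ (B.toNat : ℤ) := Int.self_le_toNat B
      have h5 : ((B.toNat : ℤ) + 1) ≤ ((n / m : ℕ) : ℤ) := by exact_mod_cast h3
      omega
    set N' := m * (B.toNat + 1) with hN'
    have hr := hrec N'
    have n1 : c N' < 0 := neg N' (by omega)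
    have n2 : c (N' + m) < 0 := neg _ (by omega)
    have n3 : c (N' + 1) < 0 := neg _ (by omega)
    have n4 : c (N' + m + 1) < 0 := neg _ (by omega)
    rw [max_eq_left n2.le, max_eq_left n3.le] at hr
    omega
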